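/- Let ω be a Brun word over 3 letters and C, N ∈ ℕ. If ω^{(N)} (the N-th desubstituted word) is not (12√3·3^N·C)-balanced, then ω is not C-balanced. -/

import Mathlib

def prefixW {A : Type*} (w : ℕ → A) (n : ℕ) : List A := (List.range n).map w

def IsFactor {A : Type*} (w : ℕ → A) (u : List A) : Prop :=
  ∃ k, u = (List.range u.length).map (fun t => w (k + t))

def applySub {A : Type*} (σ : A → List A) (w : List A) : List A := w.flatMap σ

def SubstOfInf {A : Type*} (σ : A → List A) (w' w : ℕ → A) : Prop :=
  ∀ m, prefixW w (applySub σ (prefixW w' m)).length = applySub σ (prefixW w' m)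

def FactorOfImage {A : Type*} (σ : A → List A) (ω : ℕ → A) (u : List A) : Prop :=
  ∃ w, IsFactor ω w ∧ u <:+: applySub σ w

def BalancedWord {A : Type*} [DecidableEq A] (C : ℕ) (w : ℕ → A) : Prop :=
  ∀ u v, IsFactor w u → IsFactor w v → u.length = v.length →
    ∀ i, |(u.count i : ℤ) - (v.count i : ℤ)| ≤ (C : ℤ)

def brunSub (i j : Fin 3) : Fin 3 → List (Fin 3) := fun k => if k = j then [i, j] else [k]

def BalancedWordR {A : Type*} [DecidableEq A] (C : ℝ) (w : ℕ → A) : Prop :=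
  ∀ u v, IsFactor w u → IsFactor w v → u.length = v.length →
    ∀ i, |(u.count i : ℝ) - (v.count i : ℝ)| ≤ C

open Filter Topology

lemma prefixW_length {A : Type*} (w : ℕ → A) (n : ℕ) : (prefixW w n).length = n := by
  simp [prefixW]

lemma prefixW_add {A : Type*} (w : ℕ → A) (p m : ℕ) :
    prefixW w (p + m) = prefixW w p ++ (List.range m).map (fun t => w (p + t)) := by
  simp [prefixW, List.range_add, Function.comp]

lemma window_isFactor {A : Type*} (w : ℕ → A) (p m : ℕ) :
    IsFactor w ((List.range m).map (fun t => w (p + t))) :=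
  ⟨p, by simp⟩

lemma prefix_isFactor {A : Type*} (w : ℕ → A) (m : ℕ) : IsFactor w (prefixW w m) :=
  ⟨0, by simp [prefixW]⟩

lemma sum_count_eq_length (l : List (Fin 3)) : ∑ k : Fin 3, l.count k = l.length := by
  induction l with
  | nil => simp
  | cons a l ih => simp [List.count_cons, Finset.sum_add_distrib, ih, Finset.sum_ite_eq]

lemma applySub_cons {A : Type*} (σ : A → List A) (a : A) (u : List A) :
    applySub σ (a :: u) = σ a ++ applySub σ u := rfl

lemma applySub_append {A : Type*} (σ : A → List A) (u v : List A) :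
    applySub σ (u ++ v) = applySub σ u ++ applySub σ v := by
  simp [applySub]

lemma brunSub_count (i j : Fin 3) (hij : i ≠ j) (u : List (Fin 3)) (k : Fin 3) :
    (applySub (brunSub i j) u).count k = u.count k + if k = i then u.count j else 0 := by
  induction u with
  | nil => simp [applySub]
  | cons a u ih =>
    rw [applySub_cons, List.count_append, ih]
    by_cases haj : a = j <;> by_cases hki : k = i <;>
      simp_all [brunSub, List.count_cons, List.count_singleton, eq_comm (a := k)] <;> omega

lemma brunSub_length (i j : Fin 3) (u : List (Fin 3)) :
    (applySub (brunSub i j) u).length = u.length + u.count j := by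
  induction u with
  | nil => simp [applySub]
  | cons a u ih =>
    rw [applySub_cons, List.length_append, ih]
    by_cases h : a = j <;> simp [brunSub, h, List.count_cons] <;> omega

lemma factor_image {A : Type*} (σ : A → List A) (w' w : ℕ → A) (h : SubstOfInf σ w' w)
    (u : List A) (hu : IsFactor w' u) : IsFactor w (applySub σ u) := by
  obtain ⟨p, hp⟩ := hu
  have hpre : prefixW w' (p + u.length) = prefixW w' p ++ u := by
    rw [prefixW_add, ← hp]
  have h2 := h (p + u.length)
  rw [hpre, applySub_append, List.length_append] at h2
  rw [prefixW_add] at h2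
  have hlen : (prefixW w (applySub σ (prefixW w' p)).length).length
      = (applySub σ (prefixW w' p)).length := prefixW_length _ _
  have := List.append_inj h2.symm (by rw [prefixW_length])
  exact ⟨(applySub σ (prefixW w' p)).length, this.2⟩

lemma exists_freq (w : ℕ → Fin 3) (C : ℝ) (hC : 0 ≤ C) (hbal : BalancedWordR C w) (k : Fin 3) :
    ∃ f : ℝ, Tendsto (fun n : ℕ => ((prefixW w (n+1)).count k : ℝ) / (n+1)) atTop (𝓝 f) ∧
      ∀ n : ℕ, |((prefixW w n).count k : ℝ) - f * n| ≤ C := by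
  set a : ℕ → ℝ := fun n => ((prefixW w n).count k : ℝ) with ha
  have hq : ∀ p m : ℕ, |a (p + m) - a p - a m| ≤ C := by
    intro p m
    have hcnt : a (p + m) = a p + (((List.range m).map (fun t => w (p + t))).count k : ℝ) := by
      simp only [ha]
      rw [prefixW_add]
      push_cast [List.count_append]
      ring
    have hb := hbal (prefixW w m) ((List.range m).map (fun t => w (p + t)))
        (prefix_isFactor w m) (window_isFactor w p m) (by simp [prefixW_length]) k
    have h2 : a (p+m) - a p - a m
        = -(((prefixW w m).count k : ℝ) - (((List.range m).map (fun t => w (p + t))).count k : ℝ)) := by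
      rw [hcnt]; simp only [ha]; ring
    rw [h2, abs_neg]
    exact hb
  have hmul : ∀ n m : ℕ, |a (n * m) - (m : ℝ) * a n| ≤ (m : ℝ) * C := by
    intro n m
    induction m with
    | zero => simp [ha, prefixW]
    | succ m ih =>
      have h1 := hq (n * m) n
      have he : n * (m + 1) = n * m + n := by ring
      rw [he]
      push_cast
      calc |a (n*m+n) - ((m:ℝ)+1) * a n|
          = |(a (n*m+n) - a (n*m) - a n) + (a (n*m) - (m:ℝ) * a n)| := by congr 1; ring
        _ ≤ |a (n*m+n) - a (n*m) - a n| + |a (n*m) - (m:ℝ)*a n| := abs_add_le _ _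
        _ ≤ C + (m:ℝ)*C := add_le_add h1 ih
        _ = ((m:ℝ)+1)*C := by ring
  set s : ℕ → ℝ := fun n => a (n+1) / ((n:ℝ)+1) with hs
  have key : ∀ p q : ℕ, |s p - a ((p+1)*(q+1)) / (((p:ℝ)+1)*((q:ℝ)+1))| ≤ C/((p:ℝ)+1) := by
    intro p q
    have h1 := hmul (p+1) (q+1)
    push_cast at h1
    have hp : (0:ℝ) < (p:ℝ) + 1 := by positivity
    have hq' : (0:ℝ) < (q:ℝ) + 1 := by positivity
    have heq : s p - a ((p+1)*(q+1)) / (((p:ℝ)+1)*((q:ℝ)+1))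
        = -((a ((p+1)*(q+1)) - ((q:ℝ)+1) * a (p+1)) / (((p:ℝ)+1)*((q:ℝ)+1))) := by
      simp only [hs]
      field_simp
      ring
    rw [heq, abs_neg, abs_div, abs_of_pos (by positivity : (0:ℝ) < ((p:ℝ)+1)*((q:ℝ)+1)),
      div_le_div_iff₀ (by positivity) hp]
    nlinarith [h1]
  have hdist : ∀ n m : ℕ, |s n - s m| ≤ C/((n:ℝ)+1) + C/((m:ℝ)+1) := by
    intro n m
    have h1 := key n m
    have h2 := key m n
    rw [show (m+1)*(n+1) = (n+1)*(m+1) by ring, show ((m:ℝ)+1)*((n:ℝ)+1) = ((n:ℝ)+1)*((m:ℝ)+1) by ring] at h2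
    calc |s n - s m| = |(s n - a ((n+1)*(m+1)) / (((n:ℝ)+1)*((m:ℝ)+1)))
          - (s m - a ((n+1)*(m+1)) / (((n:ℝ)+1)*((m:ℝ)+1)))| := by congr 1; ring
      _ ≤ _ := abs_sub _ _
      _ ≤ C/((n:ℝ)+1) + C/((m:ℝ)+1) := add_le_add h1 h2
  have hb0 : Tendsto (fun N : ℕ => C/((N:ℝ)+1) + C/((N:ℝ)+1)) atTop (𝓝 0) := by
    have h := tendsto_const_div_atTop_nhds_zero_nat C
    have h2 : Tendsto (fun N : ℕ => C / ((N:ℝ)+1)) atTop (𝓝 0) :=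
      (h.comp (tendsto_add_atTop_nat 1)).congr (fun n => by simp [Function.comp])
    simpa using h2.add h2
  have hcau : CauchySeq s := by
    apply cauchySeq_of_le_tendsto_0 (fun N : ℕ => C/((N:ℝ)+1) + C/((N:ℝ)+1)) _ hb0
    intro n m N hn hm
    rw [Real.dist_eq]
    calc |s n - s m| ≤ C/((n:ℝ)+1) + C/((m:ℝ)+1) := hdist n m
      _ ≤ C/((N:ℝ)+1) + C/((N:ℝ)+1) := by
          have hn' : ((N:ℝ)+1) ≤ (n:ℝ)+1 := by exact_mod_cast Nat.succ_le_succ hn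
          have hm' : ((N:ℝ)+1) ≤ (m:ℝ)+1 := by exact_mod_cast Nat.succ_le_succ hm
          gcongr <;> positivity
  obtain ⟨f, hf⟩ := cauchySeq_tendsto_of_complete hcau
  refine ⟨f, hf, ?_⟩
  have hclose : ∀ n : ℕ, |s n - f| ≤ C / ((n:ℝ)+1) := by
    intro n
    have h1 : Tendsto (fun m : ℕ => |s n - s m|) atTop (𝓝 (|s n - f|)) :=
      (tendsto_const_nhds.sub hf).abs
    have h2 : Tendsto (fun m : ℕ => C/((n:ℝ)+1) + C/((m:ℝ)+1)) atTop (𝓝 (C/((n:ℝ)+1) + 0)) := by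
      apply tendsto_const_nhds.add
      exact ((tendsto_const_div_atTop_nhds_zero_nat C).comp (tendsto_add_atTop_nat 1)).congr
        (fun n => by simp [Function.comp])
    have := le_of_tendsto_of_tendsto' h1 h2 (fun m => hdist n m)
    simpa using this
  intro n
  cases n with
  | zero => simpa [ha, prefixW] using hC
  | succ n =>
    have h := hclose n
    have hpos : (0:ℝ) < (n:ℝ)+1 := by positivity
    have heq : a (n+1) - f * ((n:ℝ)+1) = (s n - f) * ((n:ℝ)+1) := by
      simp only [hs]; field_simp
    push_cast
    rw [heq, abs_mul, abs_of_pos hpos]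
    calc |s n - f| * ((n:ℝ)+1) ≤ (C / ((n:ℝ)+1)) * ((n:ℝ)+1) := by
          apply mul_le_mul_of_nonneg_right h hpos.le
      _ = C := by field_simp

lemma exists_freq_vec (w : ℕ → Fin 3) (C : ℝ) (hC : 0 ≤ C) (hbal : BalancedWordR C w) :
    ∃ f : Fin 3 → ℝ, (∀ k, 0 ≤ f k) ∧ (∑ k, f k = 1) ∧
      ∀ u, IsFactor w u → ∀ k, |(u.count k : ℝ) - f k * u.length| ≤ 2 * C := by
  choose f hft hfd using fun k => exists_freq w C hC hbal k
  refine ⟨f, ?_, ?_, ?_⟩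
  · intro k
    exact ge_of_tendsto' (hft k) (fun n => by positivity)
  · have heq : ∀ n : ℕ, ∑ k : Fin 3, ((prefixW w (n+1)).count k : ℝ)/((n:ℝ)+1) = 1 := by
      intro n
      rw [← Finset.sum_div]
      have h1 := sum_count_eq_length (prefixW w (n+1))
      rw [prefixW_length] at h1
      have h2 : (∑ k : Fin 3, ((prefixW w (n+1)).count k : ℝ)) = (n:ℝ)+1 := by
        exact_mod_cast congrArg (Nat.cast : ℕ → ℝ) h1
      rw [h2]
      field_simp
    have hsum : Tendsto (fun n : ℕ => ∑ k : Fin 3, ((prefixW w (n+1)).count k : ℝ)/((n:ℝ)+1))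
        atTop (𝓝 (∑ k, f k)) := tendsto_finset_sum _ (fun k _ => hft k)
    have hone : Tendsto (fun n : ℕ => ∑ k : Fin 3, ((prefixW w (n+1)).count k : ℝ)/((n:ℝ)+1))
        atTop (𝓝 1) := by
      rw [show (fun n : ℕ => ∑ k : Fin 3, ((prefixW w (n+1)).count k : ℝ)/((n:ℝ)+1))
        = fun _ => (1:ℝ) from funext heq]
      exact tendsto_const_nhds
    exact tendsto_nhds_unique hsum hone
  · intro u hu k
    obtain ⟨p, hp⟩ := hu
    have hsplit : prefixW w (p + u.length) = prefixW w p ++ u := by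
      rw [prefixW_add, ← hp]
    have h1 := hfd k (p + u.length)
    have h2 := hfd k p
    have hcnt : ((prefixW w (p + u.length)).count k : ℝ) = (prefixW w p).count k + u.count k := by
      rw [hsplit]
      push_cast [List.count_append]
      ring
    rw [hcnt] at h1
    push_cast at h1 h2 ⊢
    rw [abs_le] at h1 h2 ⊢
    constructor <;> [nlinarith [h1.1, h2.2]; nlinarith [h1.2, h2.1]]

lemma step_lemma (i j : Fin 3) (hij : i ≠ j) (w' w : ℕ → Fin 3)
    (hsub : SubstOfInf (brunSub i j) w' w) (D : ℝ) (hD : 0 ≤ D)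
    (f : Fin 3 → ℝ) (hf0 : ∀ k, 0 ≤ f k) (hf1 : ∑ k, f k = 1)
    (hdev : ∀ u, IsFactor w u → ∀ k, |(u.count k : ℝ) - f k * u.length| ≤ D) :
    ∃ g : Fin 3 → ℝ, (∀ k, 0 ≤ g k) ∧ (∑ k, g k = 1) ∧
      ∀ u, IsFactor w' u → ∀ k, |(u.count k : ℝ) - g k * u.length| ≤ 3 * D := by
  have hji : f j ≤ f i := by
    by_contra hlt
    push_neg at hlt
    obtain ⟨m, hm⟩ := exists_nat_gt ((2*D)/(f j - f i))
    set v := prefixW w' m with hv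
    set P := applySub (brunSub i j) v with hP
    have hPpre : prefixW w P.length = P := hsub m
    have hPfac : IsFactor w P := by
      rw [← hPpre]; exact prefix_isFactor w P.length
    have hcj : P.count j = v.count j := by
      rw [hP, brunSub_count i j hij]; simp [hij.symm]
    have hci : P.count i = v.count i + v.count j := by
      rw [hP, brunSub_count i j hij]; simp
    have hcnt : P.count j ≤ P.count i := by omega
    have hlen : m ≤ P.length := by
      rw [hP, brunSub_length, hv, prefixW_length]; omega
    have hdj := hdev P hPfac j
    have hdi := hdev P hPfac i
    rw [abs_le] at hdj hdi
    have hkey : (f j - f i) * P.length ≤ 2 * D := by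
      have : (P.count j : ℝ) ≤ (P.count i : ℝ) := by exact_mod_cast hcnt
      nlinarith [hdj.1, hdj.2, hdi.1, hdi.2]
    have hm' : (2*D)/(f j - f i) < (m:ℝ) := hm
    have hpos : 0 < f j - f i := by linarith
    have : 2*D < (f j - f i) * m := by
      rw [div_lt_iff₀ hpos] at hm'
      linarith
    have hmP : (f j - f i) * m ≤ (f j - f i) * P.length := by
      apply mul_le_mul_of_nonneg_left _ hpos.le
      exact_mod_cast hlen
    linarith
  have hsum3 : f 0 + f 1 + f 2 = 1 := by
    rw [← hf1]; simp [Fin.sum_univ_three]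
  have hfi1 : f i + f j ≤ 1 := by
    have h := Finset.sum_le_sum_of_subset_of_nonneg
      (Finset.subset_univ ({i, j} : Finset (Fin 3))) (fun k _ _ => hf0 k)
    rw [Finset.sum_pair hij] at h
    linarith [hf1 ▸ h]
  have ht2 : f j ≤ 1/2 := by linarith
  set t := f j with htdef
  set s := 1 - t with hsdef
  have hs2 : (1:ℝ)/2 ≤ s := by simp only [hsdef]; linarith
  have hspos : 0 < s := by linarith
  set g : Fin 3 → ℝ := fun k => if k = i then (f i - f j)/s else f k / s with hg
  have hgalt : ∀ k, g k = f k / s + (if k = i then -(f j)/s else 0) := by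
    intro k
    by_cases h : k = i <;> simp [hg, h] <;> ring
  have bound2 : ∀ X Y c : ℝ, |X| ≤ D → |Y| ≤ D → 0 ≤ c → c ≤ 1 → |X + c * Y| ≤ 3 * D := by
    intro X Y c h1 h2 h3 h4
    calc |X + c*Y| ≤ |X| + |c*Y| := abs_add_le _ _
      _ = |X| + c * |Y| := by rw [abs_mul, abs_of_nonneg h3]
      _ ≤ D + 1 * D := by nlinarith [abs_nonneg Y]
      _ ≤ 3*D := by linarith
  have bound3 : ∀ X Y Z c : ℝ, |X| ≤ D → |Y| ≤ D → |Z| ≤ D → 0 ≤ c → c ≤ 1 →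
      |X - Y + c * Z| ≤ 3 * D := by
    intro X Y Z c h1 h2 h3 h4 h5
    calc |X - Y + c*Z| ≤ |X - Y| + |c*Z| := abs_add_le _ _
      _ ≤ |X| + |Y| + |c*Z| := by linarith [abs_sub X Y]
      _ = |X| + |Y| + c * |Z| := by rw [abs_mul, abs_of_nonneg h4]
      _ ≤ D + D + 1 * D := by nlinarith [abs_nonneg Z]
      _ ≤ 3*D := by linarith
  refine ⟨g, ?_, ?_, ?_⟩
  · intro k
    have h1 : 0 ≤ (f i - f j) / s := div_nonneg (by linarith) hspos.le
    have h2 : 0 ≤ f k / s := div_nonneg (hf0 k) hspos.le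
    by_cases h : k = i <;> simp only [hg, h, if_true, if_neg] <;> simp [h] <;> assumption
  · rw [Fintype.sum_congr _ _ hgalt]
    rw [Finset.sum_add_distrib, Finset.sum_ite_eq' Finset.univ i (fun _ => -(f j)/s)]
    simp only [Finset.mem_univ, if_true]
    rw [← Finset.sum_div, hf1]
    field_simp
    simp only [hsdef, htdef]
    ring
  · intro u hu k
    set U := applySub (brunSub i j) u with hU
    have hUfac : IsFactor w U := factor_image _ _ _ hsub u hu
    have hUj : U.count j = u.count j := by
      rw [hU, brunSub_count i j hij]; simp [hij.symm]
    have hUi : U.count i = u.count i + u.count j := by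
      rw [hU, brunSub_count i j hij]; simp
    have hUlen : U.length = u.length + u.count j := by rw [hU, brunSub_length]
    have hLm : (U.length : ℝ) = (u.length : ℝ) + (u.count j : ℝ) := by
      rw [hUlen]; push_cast; ring
    have hdj := hdev U hUfac j
    rw [hUj] at hdj
    have hLs : |(U.length : ℝ) * s - (u.length : ℝ)| ≤ D := by
      have he : (U.length : ℝ) * s - (u.length : ℝ) = (u.count j : ℝ) - f j * (U.length : ℝ) := by
        simp only [hsdef, htdef]; rw [hLm]; ring
      rw [he]; exact hdj
    by_cases hk : k = i
    · subst hk
      have hdi := hdev U hUfac k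
      rw [hUi] at hdi
      push_cast at hdi
      have hgk : g k = (f k - f j)/s := by simp [hg]
      have hiden : (u.count k : ℝ) - g k * (u.length : ℝ)
          = (((u.count k : ℝ) + (u.count j : ℝ)) - f k * (U.length : ℝ))
            - ((u.count j : ℝ) - f j * (U.length : ℝ))
            + ((f k - f j)/s) * ((U.length : ℝ) * s - (u.length : ℝ)) := by
        rw [hgk]; field_simp; ring
      rw [hiden]
      apply bound3 _ _ _ _ hdi hdj hLs (div_nonneg (by linarith) hspos.le)
      rw [div_le_one hspos]
      have : f k ≤ 1 := by linarith [hf0 j]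
      simp only [hsdef, htdef]; linarith
    · have hgk : g k = f k / s := by simp [hg, hk]
      have hfk1 : f k + f j ≤ 1 := by
        by_cases hkj : k = j
        · subst hkj; linarith [hf0 i]
        · have h := Finset.sum_le_sum_of_subset_of_nonneg
            (Finset.subset_univ ({k, j} : Finset (Fin 3))) (fun a _ _ => hf0 a)
          rw [Finset.sum_pair hkj] at h
          linarith [hf1 ▸ h]
      have hcU : U.count k = u.count k := by
        by_cases hkj : k = j
        · subst hkj; exact hUj
        · rw [hU, brunSub_count i j hij]; simp [hk]
      have hdk := hdev U hUfac k
      rw [hcU] at hdk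
      have hiden : (u.count k : ℝ) - g k * (u.length : ℝ)
          = ((u.count k : ℝ) - f k * (U.length : ℝ))
            + (f k/s) * ((U.length : ℝ) * s - (u.length : ℝ)) := by
        rw [hgk]; field_simp; ring
      rw [hiden]
      apply bound2 _ _ _ hdk hLs (div_nonneg (hf0 k) hspos.le)
      rw [div_le_one hspos]
      simp only [hsdef, htdef]; linarith

theorem stmt16 (i j : ℕ → Fin 3)
    (hij : ∀ n, i n ≠ j n)
    (hadm : ∀ n, (i (n + 1) = i n ∧ j (n + 1) = j n) ∨ i (n + 1) = j n)
    (hinf : ∀ a : Fin 3, ∀ N : ℕ, ∃ n ≥ N, i n = a)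
    (ω : ℕ → Fin 3) (Ω : ℕ → ℕ → Fin 3) (hΩ0 : Ω 0 = ω)
    (hΩ : ∀ n, SubstOfInf (brunSub (i n) (j n)) (Ω (n + 1)) (Ω n))
    (C N : ℕ)
    (hN : ¬ BalancedWordR (12 * Real.sqrt 3 * 3 ^ N * C) (Ω N)) :
    ¬ BalancedWordR (C : ℝ) ω := by
  intro hbal
  apply hN
  have hC : (0:ℝ) ≤ (C:ℝ) := Nat.cast_nonneg C
  have hbal0 : BalancedWordR (C:ℝ) (Ω 0) := by rw [hΩ0]; exact hbal
  have hrec : ∀ n, ∃ f : Fin 3 → ℝ, (∀ k, 0 ≤ f k) ∧ (∑ k, f k = 1) ∧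
      ∀ u, IsFactor (Ω n) u → ∀ k, |(u.count k : ℝ) - f k * u.length| ≤ 2 * (C:ℝ) * 3 ^ n := by
    intro n
    induction n with
    | zero =>
      obtain ⟨f, h0, h1, h2⟩ := exists_freq_vec (Ω 0) (C:ℝ) hC hbal0
      exact ⟨f, h0, h1, by simpa using h2⟩
    | succ n ih =>
      obtain ⟨f, h0, h1, h2⟩ := ih
      obtain ⟨g, g0, g1, g2⟩ := step_lemma (i n) (j n) (hij n) (Ω (n+1)) (Ω n) (hΩ n)
        (2 * (C:ℝ) * 3 ^ n) (by positivity) f h0 h1 h2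
      refine ⟨g, g0, g1, fun u hu k => ?_⟩
      have := g2 u hu k
      have he : 3 * (2 * (C:ℝ) * 3 ^ n) = 2 * (C:ℝ) * 3 ^ (n+1) := by ring
      linarith
  obtain ⟨f, h0, h1, h2⟩ := hrec N
  intro u v hu hv hlen k
  have b1 := h2 u hu k
  have b2 := h2 v hv k
  rw [← hlen] at b2
  have hsq : (1:ℝ) ≤ Real.sqrt 3 := by
    rw [show (1:ℝ) = Real.sqrt 1 from (Real.sqrt_one).symm]
    exact Real.sqrt_le_sqrt (by norm_num)
  have hpow : (0:ℝ) ≤ (3:ℝ) ^ N * (C:ℝ) := by positivity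
  have hmul := mul_le_mul_of_nonneg_right hsq hpow
  rw [abs_le] at b1 b2 ⊢
  constructor <;> nlinarith [b1.1, b1.2, b2.1, b2.2, hmul, hpow]
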